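/- Let k ≥ 1 be an integer, let i = ⌈log₂ k⌉ and p = 2^{-i}. If A_1, ..., A_k are pairwise independent events each of probability p, then P(A_1 ∪ ... ∪ A_k) > 3/8. -/

import Mathlib

open MeasureTheory

/-- Bonferroni-type lower bound in additive (ENNReal-friendly) form. -/
lemma bonferroni_aux {Ω : Type*} [MeasurableSpace Ω] (P : Measure Ω)
    [IsProbabilityMeasure P] {k : ℕ} (A : Fin k → Set Ω)
    (hA : ∀ i, MeasurableSet (A i)) (q : ENNReal)
    (hp : ∀ i, P (A i) = q)
    (hpair : ∀ i j, i ≠ j → P (A i ∩ A j) = q ^ 2) (s : Finset (Fin k)) :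
    (s.card : ENNReal) * q ≤ P (⋃ i ∈ s, A i) + (s.card.choose 2 : ℕ) * q ^ 2 := by
  induction s using Finset.induction_on with
  | empty => simp
  | @insert a s ha ih =>
    rw [Finset.card_insert_of_notMem ha]
    have hmeas : MeasurableSet (⋃ i ∈ s, A i) :=
      MeasurableSet.biUnion s.countable_toSet (fun i _ => hA i)
    have hunion : P (A a ∪ ⋃ i ∈ s, A i) + P (A a ∩ ⋃ i ∈ s, A i)
        = P (A a) + P (⋃ i ∈ s, A i) := measure_union_add_inter (A a) hmeas
    have hint : P (A a ∩ ⋃ i ∈ s, A i) ≤ (s.card : ENNReal) * q ^ 2 := by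
      have : A a ∩ ⋃ i ∈ s, A i = ⋃ i ∈ s, (A a ∩ A i) := by
        simp [Set.inter_iUnion]
      rw [this]
      calc P (⋃ i ∈ s, (A a ∩ A i)) ≤ ∑ i ∈ s, P (A a ∩ A i) :=
            measure_biUnion_finset_le s _
        _ = (s.card : ENNReal) * q ^ 2 := by
            rw [Finset.sum_congr rfl (fun i hi => hpair a i (by rintro rfl; exact ha hi))]
            simp [mul_comm]
    have hch : ((s.card + 1).choose 2 : ℕ) = s.card.choose 2 + s.card := by
      simp [Nat.choose_succ_succ, Nat.choose_one_right, Nat.add_comm]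
    have hU : ⋃ i ∈ insert a s, A i = A a ∪ ⋃ i ∈ s, A i := by
      simp [Set.biUnion_insert]
    push_cast
    rw [hU]
    calc ((s.card : ENNReal) + 1) * q = q + (s.card : ENNReal) * q := by ring
      _ ≤ q + (P (⋃ i ∈ s, A i) + (s.card.choose 2 : ℕ) * q ^ 2) := by
            exact add_le_add_right ih q
      _ = (P (A a) + P (⋃ i ∈ s, A i)) + (s.card.choose 2 : ℕ) * q ^ 2 := by
            rw [hp a]; ring
      _ = (P (A a ∪ ⋃ i ∈ s, A i) + P (A a ∩ ⋃ i ∈ s, A i))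
            + (s.card.choose 2 : ℕ) * q ^ 2 := by rw [hunion]
      _ ≤ P (A a ∪ ⋃ i ∈ s, A i) + ((s.card : ENNReal) * q ^ 2
            + (s.card.choose 2 : ℕ) * q ^ 2) := by
            rw [add_assoc]
            exact add_le_add_right (add_le_add_left hint _) _
      _ = P (A a ∪ ⋃ i ∈ s, A i) + (((s.card + 1).choose 2 : ℕ)) * q ^ 2 := by
            rw [hch]; push_cast; ring

/-- let `k ≥ 1`, `i = ⌈log₂ k⌉` and `p = 2^{-i}`. If `A_1, ..., A_k`
are pairwise independent events each of probability `p`, then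
`P(A_1 ∪ ... ∪ A_k) > 3/8`. -/
theorem stmt_11 {Ω : Type*} [MeasurableSpace Ω] (P : Measure Ω)
    [IsProbabilityMeasure P] (k : ℕ) (hk : 1 ≤ k) (A : Fin k → Set Ω)
    (hA : ∀ i, MeasurableSet (A i))
    (hp : ∀ i, P (A i) = 2⁻¹ ^ (Nat.clog 2 k))
    (hpair : ∀ i j, i ≠ j → P (A i ∩ A j) = ((2 : ENNReal)⁻¹ ^ (Nat.clog 2 k)) ^ 2) :
    3 / 8 < P (⋃ i, A i) := by
  set n := Nat.clog 2 k with hn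
  set q : ENNReal := 2⁻¹ ^ n with hq
  have hbon := bonferroni_aux P A hA q hp hpair Finset.univ
  rw [Finset.card_univ, Fintype.card_fin] at hbon
  have hUeq : ⋃ i ∈ (Finset.univ : Finset (Fin k)), A i = ⋃ i, A i := by simp
  rw [hUeq] at hbon
  -- finiteness facts
  have hqne : q ≠ ⊤ := by
    rw [hq]; exact ENNReal.pow_ne_top (by simp)
  have hc2ne : ((k.choose 2 : ℕ) : ENNReal) * q ^ 2 ≠ ⊤ := by
    exact ENNReal.mul_ne_top (ENNReal.natCast_ne_top _) (ENNReal.pow_ne_top hqne)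
  -- the key numeric inequality
  have hnum : (3 / 8 : ENNReal) + (k.choose 2 : ℕ) * q ^ 2 < (k : ENNReal) * q := by
    rw [← ENNReal.toReal_lt_toReal
      (by exact ENNReal.add_ne_top.2 ⟨by simp [ENNReal.div_eq_top], hc2ne⟩)
      (ENNReal.mul_ne_top (ENNReal.natCast_ne_top _) hqne)]
    have hqr : q.toReal = ((2 : ℝ))⁻¹ ^ n := by
      rw [hq]; simp [ENNReal.toReal_pow]
    rw [ENNReal.toReal_add (by simp [ENNReal.div_eq_top]) hc2ne, ENNReal.toReal_mul,
      ENNReal.toReal_mul, ENNReal.toReal_pow, hqr]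
    simp only [ENNReal.toReal_div, ENNReal.toReal_ofNat, ENNReal.toReal_natCast]
    set p : ℝ := (2 : ℝ)⁻¹ ^ n with hpdef
    have hppos : 0 < p := by positivity
    have hple : (k : ℝ) * p ≤ 1 := by
      have h1 : (k : ℝ) ≤ 2 ^ n := by
        exact_mod_cast Nat.le_pow_clog (by norm_num) k
      have : p = ((2 : ℝ) ^ n)⁻¹ := by rw [hpdef, inv_pow]
      rw [this]
      rw [mul_inv_le_iff₀ (by positivity), one_mul]
      exact h1
    have hpgt : (1 : ℝ) / 2 < (k : ℝ) * p := by
      have h2 : (2 : ℝ) ^ n < 2 * k := by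
        rcases eq_or_lt_of_le hk with h | h
        · have : n = 0 := by rw [hn, ← h]; simp
          rw [this]; push_cast [← h]; norm_num
        · have hn1 : 1 ≤ n := Nat.clog_pos (by norm_num) h
          have h3 : (2 : ℕ) ^ (n - 1) < k := Nat.pow_pred_clog_lt_self (by norm_num) h
          have : (2 : ℝ) ^ n = 2 * 2 ^ (n - 1) := by
            rw [← pow_succ']
            congr 1
            omega
          rw [this]
          have : (2 : ℝ) ^ (n - 1) < k := by exact_mod_cast h3
          linarith
      have hpp : p = ((2 : ℝ) ^ n)⁻¹ := by rw [hpdef, inv_pow]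
      have h4 : (0:ℝ) < 2 ^ n := by positivity
      have h5 : (1:ℝ)/2 < (k:ℝ)/2^n := by
        rw [div_lt_div_iff₀ (by norm_num) h4]; linarith
      rw [hpp, ← div_eq_mul_inv]; exact h5
    have hch : ((k.choose 2 : ℕ) : ℝ) = (k : ℝ) * (k - 1) / 2 := by
      exact Nat.cast_choose_two ℝ k
    rw [hch]
    have hk1 : (1 : ℝ) ≤ k := by exact_mod_cast hk
    nlinarith [mul_pos (by linarith : (0:ℝ) < (k : ℝ) * p - 1/2)
      (by linarith : (0:ℝ) < 3/2 - (k : ℝ) * p), hppos.le,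
      mul_nonneg (Nat.cast_nonneg k) (sq_nonneg p)]
  have := lt_of_lt_of_le hnum hbon
  rwa [ENNReal.add_lt_add_iff_right hc2ne] at this
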